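/- arXiv:1612.07491 — 2 statements merged into one kernel-verified Lean document; each statement's English description precedes it below -/
import Mathlib

section
/- Let P₁, P₂ : F^t → F be two distinct polynomials of total degree at most d, and let 0 ≤ r ≤ t. Then the probability, over a uniformly random r-dimensional affine subspace R of F^t, that P₁ and P₂ agree identically on R is at most (d/q)^{r+1}. -/
open Finset
open scoped Classical BigOperators

noncomputable section

def pr {α : Type*} (s : Finset α) (p : α → Prop) : ℝ :=
  ((s.filter p).card : ℝ) / (s.card : ℝ)

def ex {α : Type*} (s : Finset α) (f : α → ℝ) : ℝ :=
  (∑ a ∈ s, f a) / (s.card : ℝ)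

def IsAffOfDim {F : Type} [Field F] {m : ℕ} (k : ℕ) (S : Set (Fin m → F)) : Prop :=
  ∃ (x₀ : Fin m → F) (W : Submodule F (Fin m → F)),
    Module.finrank F W = k ∧ S = {x | x - x₀ ∈ W}

def aff (F : Type) [Field F] [Fintype F] (m k : ℕ) : Finset (Set (Fin m → F)) :=
  Finset.univ.filter (fun S => IsAffOfDim k S)

def affThrough (F : Type) [Field F] [Fintype F] (m k : ℕ) (R : Set (Fin m → F)) :
    Finset (Set (Fin m → F)) :=
  (aff F m k).filter (fun S => R ⊆ S)

def affMem (F : Type) [Field F] [Fintype F] (m k : ℕ) (x : Fin m → F) :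
    Finset (Set (Fin m → F)) :=
  (aff F m k).filter (fun S => x ∈ S)

def DegOn (F : Type) [Field F] {m : ℕ} (d : ℕ) (S : Set (Fin m → F))
    (h : (Fin m → F) → F) : Prop :=
  ∃ P : MvPolynomial (Fin m) F, P.totalDegree ≤ d ∧ ∀ x ∈ S, h x = MvPolynomial.eval x P

def alphaPoint (F : Type) [Field F] [Fintype F] (m k : ℕ)
    (T : Set (Fin m → F) → (Fin m → F) → F) : ℝ :=
  ex (Finset.univ : Finset (Fin m → F)) (fun x =>
    pr ((affMem F m k x) ×ˢ (affMem F m k x)) (fun p => T p.1 x = T p.2 x))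

def alphaLine (F : Type) [Field F] [Fintype F] (m k : ℕ)
    (T : Set (Fin m → F) → (Fin m → F) → F) : ℝ :=
  ex (aff F m 1) (fun ℓ =>
    pr ((affThrough F m k ℓ) ×ˢ (affThrough F m k ℓ))
      (fun p => ∀ x ∈ ℓ, T p.1 x = T p.2 x))

def alphaSub (F : Type) [Field F] [Fintype F] (m s k r : ℕ)
    (T : Set (Fin m → F) → (Fin m → F) → F) : ℝ :=
  ex (aff F m k) (fun K =>
    ex ((affThrough F m s K) ×ˢ (affThrough F m s K)) (fun p =>
      pr ((aff F m r).filter (fun R => R ⊆ K))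
        (fun R => ∀ x ∈ R, T p.1 x = T p.2 x)))

def Mop {A B : Type*} [Fintype A] [Fintype B] (Adj : A → B → Prop)
    (v : B → ℝ) (a : A) : ℝ :=
  (∑ b ∈ Finset.univ.filter (fun b => Adj a b), v b) /
    ((Finset.univ.filter (fun b => Adj a b)).card : ℝ)

def nrm {ι : Type*} [Fintype ι] (v : ι → ℝ) : ℝ :=
  Real.sqrt ((∑ i, v i ^ 2) / (Fintype.card ι : ℝ))

def lam {A B : Type*} [Fintype A] [Fintype B] (Adj : A → B → Prop) : ℝ :=
  sSup {r : ℝ | ∃ v : B → ℝ, (∑ b, v b) = 0 ∧ v ≠ 0 ∧ r = nrm (Mop Adj v) / nrm v}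

def Cxs (F : Type) [Field F] [Fintype F] (m : ℕ)
    (T : Set (Fin m → F) → (Fin m → F) → F) (x : Fin m → F) (σ : F) :
    Finset (Set (Fin m → F)) :=
  (affMem F m 3 x).filter (fun C => T C x = σ)

def Excellent (F : Type) [Field F] [Fintype F] (m : ℕ)
    (T : Set (Fin m → F) → (Fin m → F) → F) (ε γ : ℝ) (x : Fin m → F) (σ : F) : Prop :=
  ε / 2 ≤ pr (affMem F m 3 x) (fun C => T C x = σ) ∧
  ex (Cxs F m T x σ) (fun C₁ =>
    ex ((aff F m 1).filter (fun ℓ => x ∈ ℓ ∧ ℓ ⊆ C₁)) (fun ℓ =>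
      pr ((Cxs F m T x σ).filter (fun C₂ => ℓ ⊆ C₂))
        (fun C₂ => ¬ ∀ z ∈ ℓ, T C₁ z = T C₂ z))) ≤ γ

def IsLocalFn (F : Type) [Field F] [Fintype F] (m : ℕ)
    (T : Set (Fin m → F) → (Fin m → F) → F) (x : Fin m → F) (σ : F)
    (f : (Fin m → F) → F) : Prop :=
  ∀ (y : Fin m → F) (τ : F),
    ((Cxs F m T x σ).filter (fun C => y ∈ C ∧ T C y = τ)).card ≤
      ((Cxs F m T x σ).filter (fun C => y ∈ C ∧ T C y = f y)).card

def ApproxOn (F : Type) [Field F] [Fintype F] {m : ℕ} (γ : ℝ)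
    (S : Set (Fin m → F)) (u v : (Fin m → F) → F) : Prop :=
  1 - γ ≤ pr (Finset.univ.filter (fun z => z ∈ S)) (fun z => u z = v z)

def FxSet (F : Type) [Field F] [Fintype F] (m : ℕ)
    (T : Set (Fin m → F) → (Fin m → F) → F) (γ : ℝ) (x : Fin m → F)
    (f : (Fin m → F) → F) : Finset (Set (Fin m → F)) :=
  (affMem F m 3 x).filter (fun C => ApproxOn F (2 * γ) C (T C) f)

def lineThrough {F : Type} [Field F] {m : ℕ} (x y : Fin m → F) : Set (Fin m → F) :=
  {z | ∃ t : F, z = x + t • (y - x)}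

section AuxSZ

variable {F : Type} [Field F] [Fintype F] {t : ℕ}

lemma sz_aux (F : Type) [Field F] [Fintype F] :
    ∀ (n : ℕ) (p : MvPolynomial (Fin n) F), p ≠ 0 →
      ((Finset.univ.filter (fun x : Fin n → F => MvPolynomial.eval x p = 0)).card
          * Fintype.card F ≤ p.totalDegree * (Fintype.card F) ^ n) := by
  intro n
  induction n with
  | zero =>
      intro p hp
      have he : (Finset.univ.filter (fun x : Fin 0 → F => MvPolynomial.eval x p = 0)) = ∅ := by
        rw [Finset.filter_eq_empty_iff]
        intro x _
        rw [MvPolynomial.eq_C_of_isEmpty p, MvPolynomial.eval_C]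
        intro h
        exact hp (by rw [MvPolynomial.eq_C_of_isEmpty p, h, map_zero])
      rw [he]
      simp
  | succ n ih =>
      intro p hp
      set q := Fintype.card F with hq
      set f := MvPolynomial.finSuccEquiv F n p with hf
      have hf0 : f ≠ 0 := by
        simp only [hf, ne_eq, EmbeddingLike.map_eq_zero_iff]; exact hp
      set k := f.natDegree with hk
      set Qk := f.coeff k with hQk
      have hQk0 : Qk ≠ 0 := Polynomial.leadingCoeff_ne_zero.2 hf0
      have hdeg : Qk.totalDegree + k ≤ p.totalDegree :=
        MvPolynomial.totalDegree_coeff_finSuccEquiv_add_le p k hQk0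
      -- zero set splits
      set Zk : Finset (Fin n → F) :=
        Finset.univ.filter (fun s => MvPolynomial.eval s Qk = 0) with hZk
      set Z : Finset (Fin (n+1) → F) :=
        Finset.univ.filter (fun x => MvPolynomial.eval x p = 0) with hZ
      set A : Finset (Fin (n+1) → F) :=
        Finset.univ.filter (fun x => Fin.tail x ∈ Zk) with hA
      set B : Finset (Fin (n+1) → F) :=
        Finset.univ.filter (fun x => Fin.tail x ∉ Zk ∧ MvPolynomial.eval x p = 0) with hB
      have hsub : Z ⊆ A ∪ B := by
        intro x hx
        simp only [hZ, Finset.mem_filter, Finset.mem_univ, true_and] at hx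
        by_cases h : Fin.tail x ∈ Zk
        · exact Finset.mem_union_left _ (by simp [hA, h])
        · exact Finset.mem_union_right _ (by simp [hB, h, hx])
      have hAcard : A.card = q * Zk.card := by
        have : A.card = ((Finset.univ : Finset F) ×ˢ Zk).card := by
          apply Finset.card_bij (fun x _ => (x 0, Fin.tail x))
          · intro x hx
            simp only [hA, Finset.mem_filter, Finset.mem_univ, true_and] at hx
            simp [Finset.mem_product, hx]
          · intro x hx y hy hxy
            simp only [Prod.mk.injEq] at hxy
            rw [← Fin.cons_self_tail x, ← Fin.cons_self_tail y, hxy.1, hxy.2]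
          · intro b hb
            refine ⟨Fin.cons b.1 b.2, ?_, ?_⟩
            · simp only [hA, Finset.mem_filter, Finset.mem_univ, true_and, Fin.tail_cons]
              exact (Finset.mem_product.mp hb).2
            · simp
        rw [this, Finset.card_product, Finset.card_univ]
      have hBcard : B.card ≤ k * q ^ n := by
        have himg : (B.image Fin.tail).card ≤ q ^ n := by
          refine le_trans (Finset.card_le_card (Finset.subset_univ _)) ?_
          simp [Finset.card_univ, hq]
        have hfib : ∀ s ∈ B.image Fin.tail,
            (B.filter (fun x => Fin.tail x = s)).card ≤ k := by
          intro s hs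
          obtain ⟨x₀, hx₀B, hx₀⟩ := Finset.mem_image.mp hs
          have hsQk : MvPolynomial.eval s Qk ≠ 0 := by
            simp only [hB, Finset.mem_filter, Finset.mem_univ, true_and, hZk] at hx₀B
            rw [← hx₀]
            simpa using hx₀B.1
          set g := Polynomial.map (MvPolynomial.eval s) f with hg
          have hg0 : g ≠ 0 := fun h => hsQk (by
            have := Polynomial.coeff_map (MvPolynomial.eval s) k (p := f)
            rw [← hg, h] at this
            simpa using this.symm)
          refine le_trans (Finset.card_le_card_of_injOn (t := g.roots.toFinset) (fun x => x 0)
            (fun x hx => ?_) (fun x hx y hy hxy => ?_)) ?_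
          · show x 0 ∈ g.roots.toFinset
            simp only [Finset.mem_coe, Finset.mem_filter, hB, Finset.mem_univ, true_and] at hx
            have hev : MvPolynomial.eval x p = Polynomial.eval (x 0) g := by
              conv_lhs => rw [← Fin.cons_self_tail x]
              rw [hx.2, MvPolynomial.eval_eq_eval_mv_eval' s (x 0) p]
            rw [Multiset.mem_toFinset, Polynomial.mem_roots hg0]
            rw [Polynomial.IsRoot, ← hev]
            have hxB := hx.1
            exact hxB.2
          · simp only [Finset.coe_filter, Set.mem_setOf_eq] at hx hy
            simp only at hxy
            rw [← Fin.cons_self_tail x, ← Fin.cons_self_tail y, hx.2, hy.2, hxy]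
          · refine le_trans (Multiset.toFinset_card_le _) (le_trans (Polynomial.card_roots' g) ?_)
            exact Polynomial.natDegree_map_le
        exact le_trans (Finset.card_le_mul_card_image B k hfib)
          (Nat.mul_le_mul_left _ himg)
      have hZkcard : Zk.card * q ≤ Qk.totalDegree * q ^ n := ih Qk hQk0
      have hq1 : 1 ≤ q := Fintype.card_pos
      calc Z.card * q ≤ (A.card + B.card) * q :=
            Nat.mul_le_mul_right _ (le_trans (Finset.card_le_card hsub)
              (Finset.card_union_le _ _))
        _ = Zk.card * q * q + B.card * q := by rw [hAcard]; ring
        _ ≤ Qk.totalDegree * q ^ n * q + (k * q ^ n) * q := by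
            exact Nat.add_le_add (Nat.mul_le_mul_right _ hZkcard) (Nat.mul_le_mul_right _ hBcard)
        _ = (Qk.totalDegree + k) * q ^ (n+1) := by ring
        _ ≤ p.totalDegree * q ^ (n+1) := Nat.mul_le_mul_right _ hdeg

-- number of points in a coset of a submodule
lemma flat_card (x0 : Fin t → F) (W : Submodule F (Fin t → F)) :
    (Finset.univ.filter (fun x => x - x0 ∈ W)).card
      = Fintype.card F ^ (Module.finrank F W) := by
  rw [← Module.card_eq_pow_finrank (K := F) (V := W), ← Finset.card_univ]
  apply Finset.card_bij (fun x hx => (⟨x - x0, by simpa using hx⟩ : W))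
  · intro a ha; simp
  · intro a ha b hb hab
    have := congrArg Subtype.val hab
    simpa [sub_left_inj] using this
  · intro w hw
    exact ⟨(w : Fin t → F) + x0, by simp, by simp⟩

def tupS (F : Type) [Field F] [Fintype F] (t r : ℕ) :
    Finset ((Fin t → F) × (Fin r → Fin t → F)) :=
  Finset.univ.filter (fun p => LinearIndependent F p.2)

def tupB (F : Type) [Field F] [Fintype F] (t : ℕ) (Z : Finset (Fin t → F)) (r : ℕ) :
    Finset ((Fin t → F) × (Fin r → Fin t → F)) :=
  (tupS F t r).filter
    (fun p => ∀ x : Fin t → F, x - p.1 ∈ Submodule.span F (Set.range p.2) → x ∈ Z)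

lemma span_card {r : ℕ} {v : Fin r → Fin t → F} (hv : LinearIndependent F v) (x0 : Fin t → F) :
    (Finset.univ.filter (fun x => x - x0 ∈ Submodule.span F (Set.range v))).card
      = Fintype.card F ^ r := by
  rw [flat_card x0 (Submodule.span F (Set.range v)), finrank_span_eq_card hv,
    Fintype.card_fin]

-- the projection map
lemma tail_mem_tupS {r : ℕ} {p : (Fin t → F) × (Fin (r+1) → Fin t → F)}
    (hp : p ∈ tupS F t (r+1)) : (p.1, Fin.tail p.2) ∈ tupS F t r := by
  simp only [tupS, Finset.mem_filter, Finset.mem_univ, true_and] at hp ⊢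
  exact (linearIndependent_fin_succ.mp hp).1

lemma tupS_card_succ (r : ℕ) :
    (tupS F t (r+1)).card
      = (tupS F t r).card * (Fintype.card F ^ t - Fintype.card F ^ r) := by
  rw [Finset.card_eq_sum_card_fiberwise (f := fun p => (p.1, Fin.tail p.2))
    (t := tupS F t r) (fun p hp => tail_mem_tupS hp)]
  rw [Finset.sum_congr rfl (fun w hw => ?_), Finset.sum_const, smul_eq_mul]
  -- fiber card = q^t - q^r
  have hw' : LinearIndependent F w.2 := by
    simpa [tupS] using hw
  have : ((tupS F t (r+1)).filter (fun p => (p.1, Fin.tail p.2) = w)).card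
      = (Finset.univ \ Finset.univ.filter
          (fun v0 => v0 - 0 ∈ Submodule.span F (Set.range w.2))).card := by
    apply Finset.card_bij (fun p hp => p.2 0)
    · intro p hp
      simp only [Finset.mem_filter, Finset.mem_univ, true_and, tupS] at hp
      obtain ⟨hind, heq⟩ := hp
      rw [Finset.mem_sdiff]
      refine ⟨Finset.mem_univ _, ?_⟩
      simp only [Finset.mem_filter, Finset.mem_univ, true_and, sub_zero]
      have := (linearIndependent_fin_succ.mp hind).2
      rwa [show Fin.tail p.2 = w.2 from congrArg Prod.snd heq] at this
    · intro a ha b hb hab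
      simp only [Finset.mem_filter, tupS, Finset.mem_univ, true_and, Prod.ext_iff] at ha hb
      have h1 : a.1 = b.1 := ha.2.1.trans hb.2.1.symm
      have h2 : a.2 = b.2 := by
        rw [← Fin.cons_self_tail a.2, ← Fin.cons_self_tail b.2, ha.2.2, hb.2.2, hab]
      exact Prod.ext h1 h2
    · intro v0 hv0
      rw [Finset.mem_sdiff] at hv0
      simp only [Finset.mem_filter, Finset.mem_univ, true_and, sub_zero] at hv0
      refine ⟨(w.1, Fin.cons v0 w.2), ?_, by simp⟩
      simp only [Finset.mem_filter, Finset.mem_univ, true_and, tupS, Fin.tail_cons]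
      exact ⟨linearIndependent_fin_cons.mpr ⟨hw', hv0⟩, by simp⟩
  rw [this, Finset.card_sdiff_of_subset (Finset.filter_subset _ _)]
  rw [span_card hw' 0, Finset.card_univ]
  simp

lemma tail_mem_tupB {Z : Finset (Fin t → F)} {r : ℕ}
    {p : (Fin t → F) × (Fin (r+1) → Fin t → F)}
    (hp : p ∈ tupB F t Z (r+1)) : (p.1, Fin.tail p.2) ∈ tupB F t Z r := by
  simp only [tupB, Finset.mem_filter] at hp ⊢
  refine ⟨tail_mem_tupS hp.1, fun x hx => hp.2 x ?_⟩
  refine Submodule.span_mono ?_ hx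
  rintro _ ⟨i, rfl⟩
  exact ⟨i.succ, rfl⟩

lemma tupB_card_succ (Z : Finset (Fin t → F)) (r : ℕ) :
    (tupB F t Z (r+1)).card ≤ (tupB F t Z r).card * (Z.card - Fintype.card F ^ r) := by
  rw [Finset.card_eq_sum_card_fiberwise (f := fun p => (p.1, Fin.tail p.2))
    (t := tupB F t Z r) (fun p hp => tail_mem_tupB hp)]
  refine le_trans (Finset.sum_le_card_nsmul _ _ (Z.card - Fintype.card F ^ r) ?_) (by
    rw [smul_eq_mul])
  intro w hw
  have hwS : w ∈ tupS F t r := Finset.mem_of_mem_filter _ hw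
  have hw' : LinearIndependent F w.2 := by simpa [tupS] using hwS
  have hwB : ∀ x : Fin t → F, x - w.1 ∈ Submodule.span F (Set.range w.2) → x ∈ Z := by
    simp only [tupB, Finset.mem_filter] at hw; exact hw.2
  set flatF : Finset (Fin t → F) :=
    Finset.univ.filter (fun x => x - w.1 ∈ Submodule.span F (Set.range w.2)) with hflatF
  have hsub : flatF ⊆ Z := by
    intro x hx
    simp only [hflatF, Finset.mem_filter, Finset.mem_univ, true_and] at hx
    exact hwB x hx
  have hcard : (Z \ flatF).card = Z.card - Fintype.card F ^ r := by
    rw [Finset.card_sdiff_of_subset hsub, span_card hw' w.1]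
  rw [← hcard]
  apply Finset.card_le_card_of_injOn (fun p => p.1 + p.2 0)
  · intro p hp
    simp only [Finset.mem_coe, Finset.mem_filter] at hp
    obtain ⟨hpB, hpw⟩ := hp
    have hx0 : p.1 = w.1 := congrArg Prod.fst hpw
    have htl : Fin.tail p.2 = w.2 := congrArg Prod.snd hpw
    simp only [tupB, Finset.mem_filter, tupS, Finset.mem_univ, true_and] at hpB
    obtain ⟨hind, hcond⟩ := hpB
    rw [Finset.mem_coe, Finset.mem_sdiff]
    constructor
    · apply hcond
      rw [add_sub_cancel_left]
      exact Submodule.subset_span ⟨0, rfl⟩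
    · simp only [hflatF, Finset.mem_filter, Finset.mem_univ, true_and, hx0,
        add_sub_cancel_left]
      have := (linearIndependent_fin_succ.mp hind).2
      rwa [htl] at this
  · intro a ha b hb hab
    simp only [Finset.coe_filter, Set.mem_setOf_eq] at ha hb
    have h1a : a.1 = w.1 := congrArg Prod.fst ha.2
    have h1b : b.1 = w.1 := congrArg Prod.fst hb.2
    have h2a : Fin.tail a.2 = w.2 := congrArg Prod.snd ha.2
    have h2b : Fin.tail b.2 = w.2 := congrArg Prod.snd hb.2
    simp only at hab
    have h0 : a.2 0 = b.2 0 := by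
      have : a.1 = b.1 := h1a.trans h1b.symm
      rw [this] at hab
      exact add_left_cancel hab
    refine Prod.ext (h1a.trans h1b.symm) ?_
    rw [← Fin.cons_self_tail a.2, ← Fin.cons_self_tail b.2, h2a, h2b, h0]

lemma tup_main (Z : Finset (Fin t → F)) (D : ℝ) (hD0 : 0 ≤ D)
    (hDq : D ≤ (Fintype.card F : ℝ))
    (hZ : (Z.card : ℝ) * (Fintype.card F : ℝ) ≤ D * (Fintype.card F : ℝ) ^ t) :
    ∀ r : ℕ, ((tupB F t Z r).card : ℝ)
      ≤ (D / (Fintype.card F : ℝ)) ^ (r+1) * ((tupS F t r).card : ℝ) := by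
  have hq1 : (1 : ℝ) ≤ (Fintype.card F : ℝ) := by exact_mod_cast Fintype.card_pos
  have hq0 : (0 : ℝ) < (Fintype.card F : ℝ) := lt_of_lt_of_le one_pos hq1
  have hDq0 : 0 ≤ D / (Fintype.card F : ℝ) := div_nonneg hD0 (le_of_lt hq0)
  have hDq1 : D / (Fintype.card F : ℝ) ≤ 1 := (div_le_one hq0).mpr hDq
  intro r
  induction r with
  | zero =>
      have h1 : (tupB F t Z 0).card ≤ Z.card := by
        apply Finset.card_le_card_of_injOn (fun p => p.1)
        · intro p hp
          simp only [Finset.mem_coe, tupB, Finset.mem_filter] at hp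
          exact hp.2 p.1 (by simp)
        · intro a ha b hb hab
          exact Prod.ext hab (Subsingleton.elim _ _)
      have h2 : (tupS F t 0).card = Fintype.card F ^ t := by
        have : (tupS F t 0) = Finset.univ := by
          apply Finset.filter_true_of_mem
          intro p _
          exact linearIndependent_empty_type
        rw [this, Finset.card_univ]
        simp [Fintype.card_fun]
      rw [h2, pow_one]
      calc ((tupB F t Z 0).card : ℝ) ≤ (Z.card : ℝ) := by exact_mod_cast h1
        _ ≤ D * (Fintype.card F : ℝ) ^ t / (Fintype.card F : ℝ) := by
            rw [le_div_iff₀ hq0]; exact hZ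
        _ = D / (Fintype.card F : ℝ) * ((Fintype.card F ^ t : ℕ) : ℝ) := by
            push_cast; ring
  | succ r ih =>
      by_cases hb : (tupB F t Z r).card = 0
      · have h0 : (tupB F t Z (r+1)).card = 0 := by
          have h := tupB_card_succ (F := F) Z r
          rw [hb, zero_mul] at h
          exact Nat.le_zero.mp h
        rw [h0, Nat.cast_zero]
        positivity
      · -- there is a bad tuple, so the flat of some independent r-tuple sits inside Z
        obtain ⟨w, hw⟩ := Finset.card_pos.mp (Nat.pos_of_ne_zero hb)
        have hwS : w ∈ tupS F t r := Finset.mem_of_mem_filter _ hw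
        have hw' : LinearIndependent F w.2 := by simpa [tupS] using hwS
        have hrZ : Fintype.card F ^ r ≤ Z.card := by
          rw [← span_card hw' w.1]
          apply Finset.card_le_card
          intro x hx
          simp only [Finset.mem_filter, Finset.mem_univ, true_and] at hx
          simp only [tupB, Finset.mem_filter] at hw
          exact hw.2 x hx
        have hrt : r ≤ t := by
          have := hw'.fintype_card_le_finrank
          simpa using this
        have hqrt : Fintype.card F ^ r ≤ Fintype.card F ^ t :=
          Nat.pow_le_pow_right Fintype.card_pos hrt
        have hBn := tupB_card_succ (F := F) Z r
        have hSn := tupS_card_succ (F := F) (t := t) r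
        have hBcast : ((tupB F t Z (r+1)).card : ℝ)
            ≤ ((tupB F t Z r).card : ℝ) * ((Z.card : ℝ) - (Fintype.card F : ℝ) ^ r) := by
          calc ((tupB F t Z (r+1)).card : ℝ)
              ≤ (((tupB F t Z r).card * (Z.card - Fintype.card F ^ r) : ℕ) : ℝ) := by
                exact_mod_cast hBn
            _ = ((tupB F t Z r).card : ℝ) * ((Z.card : ℝ) - (Fintype.card F : ℝ) ^ r) := by
                rw [Nat.cast_mul, Nat.cast_sub hrZ]; push_cast; ring
        have hScast : ((tupS F t (r+1)).card : ℝ)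
            = ((tupS F t r).card : ℝ) * ((Fintype.card F : ℝ) ^ t - (Fintype.card F : ℝ) ^ r) := by
          rw [hSn, Nat.cast_mul, Nat.cast_sub hqrt]; push_cast; ring
        have hZle : (Z.card : ℝ) ≤ D / (Fintype.card F : ℝ) * (Fintype.card F : ℝ) ^ t := by
          rw [div_mul_eq_mul_div, le_div_iff₀ hq0]; exact hZ
        have hfac2 : (Z.card : ℝ) - (Fintype.card F : ℝ) ^ r
            ≤ D / (Fintype.card F : ℝ) * ((Fintype.card F : ℝ) ^ t - (Fintype.card F : ℝ) ^ r) := by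
          have h1 : D / (Fintype.card F : ℝ) * (Fintype.card F : ℝ) ^ r
              ≤ (Fintype.card F : ℝ) ^ r := by
            nlinarith [pow_nonneg (le_of_lt hq0) r]
          nlinarith [hZle]
        have hfac2nn : (0:ℝ) ≤ (Z.card : ℝ) - (Fintype.card F : ℝ) ^ r := by
          have : ((Fintype.card F ^ r : ℕ) : ℝ) ≤ (Z.card : ℝ) := by exact_mod_cast hrZ
          push_cast at this; linarith
        calc ((tupB F t Z (r+1)).card : ℝ)
            ≤ ((tupB F t Z r).card : ℝ) * ((Z.card : ℝ) - (Fintype.card F : ℝ) ^ r) := hBcast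
          _ ≤ ((D / (Fintype.card F : ℝ)) ^ (r+1) * ((tupS F t r).card : ℝ))
              * (D / (Fintype.card F : ℝ) * ((Fintype.card F : ℝ) ^ t - (Fintype.card F : ℝ) ^ r)) := by
              apply mul_le_mul ih hfac2 hfac2nn
              positivity
          _ = (D / (Fintype.card F : ℝ)) ^ (r+2)
              * (((tupS F t r).card : ℝ) * ((Fintype.card F : ℝ) ^ t - (Fintype.card F : ℝ) ^ r)) := by
              ring
          _ = (D / (Fintype.card F : ℝ)) ^ (r+1+1) * ((tupS F t (r+1)).card : ℝ) := by
              rw [hScast]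

def basesCount (F : Type) [Field F] [Fintype F] (r : ℕ) : ℕ :=
  (Finset.univ.filter (fun v : Fin r → (Fin r → F) =>
    LinearIndependent F v ∧ Submodule.span F (Set.range v) = ⊤)).card

lemma basesCount_pos (r : ℕ) : 0 < basesCount F r := by
  rw [basesCount, Finset.card_pos]
  refine ⟨fun i => Pi.basisFun F (Fin r) i, ?_⟩
  simp only [Finset.mem_filter, Finset.mem_univ, true_and]
  exact ⟨(Pi.basisFun F (Fin r)).linearIndependent, (Pi.basisFun F (Fin r)).span_eq⟩

lemma basesW_card {r : ℕ} (W : Submodule F (Fin t → F)) (hW : Module.finrank F W = r) :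
    (Finset.univ.filter (fun v : Fin r → (Fin t → F) =>
      LinearIndependent F v ∧ Submodule.span F (Set.range v) = W)).card = basesCount F r := by
  have e : W ≃ₗ[F] (Fin r → F) := by
    apply LinearEquiv.ofFinrankEq
    rw [hW, Module.finrank_pi, Fintype.card_fin]
  rw [basesCount]
  apply Finset.card_bij (fun v hv => fun i => e ⟨v i, by
    have hv' : Submodule.span F (Set.range v) = W := by
      simp only [Finset.mem_filter, Finset.mem_univ, true_and] at hv
      exact hv.2
    exact hv' ▸ Submodule.subset_span ⟨i, rfl⟩⟩)
  · intro v hv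
    simp only [Finset.mem_filter, Finset.mem_univ, true_and] at hv ⊢
    obtain ⟨hind, hspan⟩ := hv
    set vW : Fin r → W := fun i => ⟨v i, hspan ▸ Submodule.subset_span ⟨i, rfl⟩⟩ with hvW
    have hcomp : v = (W.subtype : W →ₗ[F] (Fin t → F)) ∘ vW := rfl
    have hindW : LinearIndependent F vW := by
      apply LinearIndependent.of_comp W.subtype
      rw [← hcomp]; exact hind
    have hspanW : Submodule.span F (Set.range vW) = ⊤ := by
      apply Submodule.map_injective_of_injective (Submodule.injective_subtype W)
      rw [Submodule.map_span, ← Set.range_comp, ← hcomp, hspan, Submodule.map_top,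
        Submodule.range_subtype]
    constructor
    · exact hindW.map' e.toLinearMap e.ker
    · show Submodule.span F (Set.range (⇑e ∘ vW)) = ⊤
      rw [Set.range_comp, ← LinearEquiv.coe_coe, ← Submodule.map_span, hspanW, Submodule.map_top]
      exact LinearMap.range_eq_top.mpr e.surjective
  · intro a ha b hb hab
    funext i
    have := congrFun hab i
    simpa [Subtype.ext_iff] using e.injective this
  · intro u hu
    simp only [Finset.mem_filter, Finset.mem_univ, true_and] at hu
    obtain ⟨hind, hspan⟩ := hu
    set vW : Fin r → W := fun i => e.symm (u i) with hvW
    refine ⟨fun i => (vW i : Fin t → F), ?_, ?_⟩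
    · simp only [Finset.mem_filter, Finset.mem_univ, true_and]
      have hindW : LinearIndependent F vW := by
        exact (hind.map' e.symm.toLinearMap e.symm.ker)
      have hspanW : Submodule.span F (Set.range vW) = ⊤ := by
        show Submodule.span F (Set.range (⇑e.symm ∘ u)) = ⊤
        rw [Set.range_comp, ← LinearEquiv.coe_coe, ← Submodule.map_span, hspan, Submodule.map_top]
        exact LinearMap.range_eq_top.mpr e.symm.surjective
      constructor
      · exact hindW.map' W.subtype (Submodule.ker_subtype W)
      · show Submodule.span F (Set.range ((W.subtype : W →ₗ[F] _) ∘ vW)) = W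
        rw [Set.range_comp, ← Submodule.map_span, hspanW, Submodule.map_top,
          Submodule.range_subtype]
    · funext i
      simp [hvW]

lemma flat_mem_aff {r : ℕ} {p : (Fin t → F) × (Fin r → Fin t → F)} (hp : p ∈ tupS F t r) :
    {x | x - p.1 ∈ Submodule.span F (Set.range p.2)} ∈ aff F t r := by
  simp only [aff, Finset.mem_filter, Finset.mem_univ, true_and]
  refine ⟨p.1, Submodule.span F (Set.range p.2), ?_, rfl⟩
  have hp' : LinearIndependent F p.2 := by simpa [tupS] using hp
  rw [finrank_span_eq_card hp', Fintype.card_fin]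

lemma fiber_card {r : ℕ} {R : Set (Fin t → F)} (hR : R ∈ aff F t r) :
    ((tupS F t r).filter
        (fun p => {x | x - p.1 ∈ Submodule.span F (Set.range p.2)} = R)).card
      = Fintype.card F ^ r * basesCount F r := by
  simp only [aff, Finset.mem_filter, Finset.mem_univ, true_and] at hR
  obtain ⟨x₀, W, hWr, rfl⟩ := hR
  have hsplit : ((tupS F t r).filter
      (fun p => {x | x - p.1 ∈ Submodule.span F (Set.range p.2)} = {x | x - x₀ ∈ W}))
    = (Finset.univ.filter (fun x : Fin t → F => x - x₀ ∈ W)) ×ˢ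
        (Finset.univ.filter (fun v : Fin r → Fin t → F =>
          LinearIndependent F v ∧ Submodule.span F (Set.range v) = W)) := by
    ext p
    simp only [Finset.mem_filter, Finset.mem_product, Finset.mem_univ, true_and, tupS]
    constructor
    · rintro ⟨hind, heq⟩
      have hp1 : p.1 - x₀ ∈ W := by
        have : p.1 ∈ {x | x - p.1 ∈ Submodule.span F (Set.range p.2)} := by
          simp
        rw [heq] at this
        exact this
      have hspan : Submodule.span F (Set.range p.2) = W := by
        ext z
        have h1 : z ∈ Submodule.span F (Set.range p.2)
            ↔ (p.1 + z) ∈ {x | x - p.1 ∈ Submodule.span F (Set.range p.2)} := by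
          simp
        rw [h1, heq]
        have : p.1 + z - x₀ = z + (p.1 - x₀) := by ring
        simp only [Set.mem_setOf_eq, this]
        exact Submodule.add_mem_iff_left W hp1
      exact ⟨hp1, hind, hspan⟩
    · rintro ⟨hp1, hind, hspan⟩
      refine ⟨hind, ?_⟩
      rw [hspan]
      ext x
      simp only [Set.mem_setOf_eq]
      constructor
      · intro h
        have : x - x₀ = (x - p.1) + (p.1 - x₀) := by ring
        rw [this]; exact W.add_mem h hp1
      · intro h
        have : x - p.1 = (x - x₀) - (p.1 - x₀) := by ring
        rw [this]; exact W.sub_mem h hp1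
  rw [hsplit, Finset.card_product, flat_card x₀ W, hWr, basesW_card W hWr]

lemma aff_transfer (r : ℕ) (cond : Set (Fin t → F) → Prop) :
    ((aff F t r).filter cond).card * (Fintype.card F ^ r * basesCount F r)
      = ((tupS F t r).filter
          (fun p => cond {x | x - p.1 ∈ Submodule.span F (Set.range p.2)})).card := by
  have hfib := Finset.card_eq_sum_card_fiberwise
    (s := (tupS F t r).filter
      (fun p => cond {x | x - p.1 ∈ Submodule.span F (Set.range p.2)}))
    (f := fun p => {x | x - p.1 ∈ Submodule.span F (Set.range p.2)})
    (t := (aff F t r).filter cond)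
    (fun p hp => by
      simp only [Finset.mem_coe, Finset.mem_filter] at hp ⊢
      exact ⟨flat_mem_aff hp.1, hp.2⟩)
  rw [hfib, Finset.sum_congr rfl (fun R hR => ?_), Finset.sum_const, smul_eq_mul]
  have hRaff : R ∈ aff F t r := Finset.mem_of_mem_filter _ hR
  have hcond : cond R := (Finset.mem_filter.mp hR).2
  rw [← fiber_card hRaff]
  congr 1
  ext p
  simp only [Finset.mem_filter]
  constructor
  · rintro ⟨⟨h1, _⟩, h3⟩; exact ⟨h1, h3⟩
  · rintro ⟨h1, h3⟩; exact ⟨⟨h1, h3 ▸ hcond⟩, h3⟩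

lemma pr_le_one' {α : Type*} (s : Finset α) (p : α → Prop) : pr s p ≤ 1 := by
  rw [pr]
  rcases Nat.eq_zero_or_pos s.card with h | h
  · rw [h]
    simp [Finset.card_eq_zero.mp h]
  · apply div_le_one_of_le₀
    · exact_mod_cast Finset.card_filter_le _ _
    · positivity

lemma aff_pr_bound (r : ℕ) (cond : Set (Fin t → F) → Prop) (Z : Finset (Fin t → F))
    (hc : ∀ p : (Fin t → F) × (Fin r → Fin t → F),
        (∀ x : Fin t → F, x - p.1 ∈ Submodule.span F (Set.range p.2) → x ∈ Z)
          ↔ cond {x | x - p.1 ∈ Submodule.span F (Set.range p.2)})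
    (D : ℝ) (hD0 : 0 ≤ D) (hDq : D ≤ (Fintype.card F : ℝ))
    (hZ : (Z.card : ℝ) * (Fintype.card F : ℝ) ≤ D * (Fintype.card F : ℝ) ^ t) :
    pr (aff F t r) cond ≤ (D / (Fintype.card F : ℝ)) ^ (r+1) := by
  have htup := tup_main Z D hD0 hDq hZ r
  have hBeq : tupB F t Z r = (tupS F t r).filter
      (fun p => cond {x | x - p.1 ∈ Submodule.span F (Set.range p.2)}) := by
    ext p
    simp only [tupB, Finset.mem_filter]
    exact and_congr Iff.rfl (hc p)
  have hA := aff_transfer (F := F) (t := t) r cond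
  have hB := aff_transfer (F := F) (t := t) r (fun _ => True)
  simp only [Finset.filter_true] at hB
  set K : ℕ := Fintype.card F ^ r * basesCount F r with hK
  have hKpos : (0:ℝ) < (K : ℝ) := by
    have : 0 < K := Nat.mul_pos (Nat.pow_pos Fintype.card_pos) (basesCount_pos r)
    exact_mod_cast this
  have hkey : (((aff F t r).filter cond).card : ℝ)
      ≤ (D / (Fintype.card F : ℝ)) ^ (r+1) * ((aff F t r).card : ℝ) := by
    rw [← mul_le_mul_iff_of_pos_right hKpos]
    have e1 : (((aff F t r).filter cond).card : ℝ) * (K : ℝ)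
        = ((tupB F t Z r).card : ℝ) := by
      rw [hBeq]; exact_mod_cast hA
    have e2 : ((aff F t r).card : ℝ) * (K : ℝ) = ((tupS F t r).card : ℝ) := by
      exact_mod_cast hB
    rw [e1, mul_assoc, e2]
    exact htup
  rw [pr]
  rcases Nat.eq_zero_or_pos (aff F t r).card with h0 | h0
  · rw [h0]
    simp only [Nat.cast_zero, div_zero]
    positivity
  · rw [div_le_iff₀ (by exact_mod_cast h0)]
    exact hkey

end AuxSZ

/-- extended Schwartz–Zippel: two distinct degree-d polynomials agree on
a random r-dimensional affine subspace with probability at most (d/q)^(r+1). -/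
theorem distinct_polys_agree_on_random_subspace
    (F : Type) [Field F] [Fintype F] (t d r : ℕ) (hr : r ≤ t)
    (P₁ P₂ : MvPolynomial (Fin t) F)
    (h₁ : P₁.totalDegree ≤ d) (h₂ : P₂.totalDegree ≤ d) (hne : P₁ ≠ P₂) :
    pr (aff F t r)
        (fun R => ∀ x ∈ R, MvPolynomial.eval x P₁ = MvPolynomial.eval x P₂) ≤
      ((d : ℝ) / (Fintype.card F : ℝ)) ^ (r + 1) := by
  classical
  set q : ℝ := (Fintype.card F : ℝ) with hqdef
  have hq0 : (0:ℝ) < q := by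
    rw [hqdef]; exact_mod_cast Fintype.card_pos
  set cond : Set (Fin t → F) → Prop :=
    fun R => ∀ x ∈ R, MvPolynomial.eval x P₁ = MvPolynomial.eval x P₂ with hcond
  rcases le_or_gt q (d : ℝ) with hdq | hdq
  · -- trivial case d ≥ q
    have h1 : pr (aff F t r) cond ≤ 1 := pr_le_one' _ _
    refine le_trans h1 (one_le_pow₀ ?_)
    rw [le_div_iff₀ hq0]
    simpa using hdq
  · -- main case d < q
    set P : MvPolynomial (Fin t) F := P₁ - P₂ with hP
    have hPne : P ≠ 0 := sub_ne_zero.mpr hne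
    have hPdeg : P.totalDegree ≤ d :=
      le_trans (MvPolynomial.totalDegree_sub P₁ P₂) (max_le h₁ h₂)
    set Z : Finset (Fin t → F) :=
      Finset.univ.filter (fun x => MvPolynomial.eval x P = 0) with hZ
    have hsznat := sz_aux F t P hPne
    have hszr : (Z.card : ℝ) * (Fintype.card F : ℝ) ≤ (d : ℝ) * (Fintype.card F : ℝ) ^ t := by
      have : Z.card * Fintype.card F ≤ d * Fintype.card F ^ t :=
        le_trans hsznat (Nat.mul_le_mul_right _ hPdeg)
      exact_mod_cast this
    refine aff_pr_bound r cond Z ?_ (d : ℝ) (by positivity) (le_of_lt hdq) hszr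
    intro p
    constructor
    · intro h x hx
      have hxZ := h x hx
      simp only [hZ, Finset.mem_filter, Finset.mem_univ, true_and, hP] at hxZ
      rw [← sub_eq_zero, ← map_sub]
      exact hxZ
    · intro h x hx
      have := h x hx
      rw [← sub_eq_zero, ← map_sub] at this
      simp only [hZ, Finset.mem_filter, Finset.mem_univ, true_and, hP]
      exact this
end
end

section
/- Let G = (A ∪ B, E) be a bi-regular bipartite graph, let B' ⊆ B be a nonempty subset of measure μ = |B'|/|B|, and let E' ⊆ E be any subset of edges. Let D₁ be the distribution on edges obtained by picking b ∈ B' uniformly and then a uniform neighbor a of b; let D₂ be the distribution obtained by picking a ∈ A uniformly and then, if N(a) ∩ B' is nonempty, a uniform b ∈ N(a) ∩ B' (outputting ⊥ otherwise, which counts as the edge not being in E'). Then |Pr_{(a,b)∼D₁}[(a,b) ∈ E'] − Pr_{(a,b)∼D₂}[(a,b) ∈ E']| ≤ λ(G)/√μ. -/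
open Finset
open scoped Classical BigOperators

noncomputable section

-- double counting
lemma dcount {A B : Type} [Fintype A] [Fintype B] (Adj : A → B → Prop) (f : B → ℝ) :
    ∑ a : A, ∑ b ∈ Finset.univ.filter (fun b => Adj a b), f b
      = ∑ b : B, ((Finset.univ.filter (fun a => Adj a b)).card : ℝ) * f b := by
  simp_rw [Finset.sum_filter, Finset.card_filter]
  rw [Finset.sum_comm]
  congr 1; funext b
  push_cast
  rw [Finset.sum_mul]
  congr 1; funext a
  by_cases h : Adj a b <;> simp [h]

lemma handshake {A B : Type} [Fintype A] [Fintype B] (Adj : A → B → Prop) (dA dB : ℕ)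
    (hregA : ∀ a : A, (Finset.univ.filter (fun b => Adj a b)).card = dA)
    (hregB : ∀ b : B, (Finset.univ.filter (fun a => Adj a b)).card = dB) :
    (dA : ℝ) * (Fintype.card A : ℝ) = (dB : ℝ) * (Fintype.card B : ℝ) := by
  have := dcount Adj (fun _ => (1:ℝ))
  simp [hregA, hregB, Finset.sum_const, mul_comm] at this
  simpa [mul_comm] using this

lemma nrm_nonneg {ι : Type*} [Fintype ι] (v : ι → ℝ) : 0 ≤ nrm v := Real.sqrt_nonneg _

lemma nrm_pos {ι : Type*} [Fintype ι] (v : ι → ℝ) (hv : v ≠ 0) : 0 < nrm v := by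
  have hcard : 0 < (Fintype.card ι : ℝ) := by
    have : Nonempty ι := by
      by_contra h
      exact hv (funext fun i => absurd ⟨i⟩ h)
    exact_mod_cast Fintype.card_pos
  obtain ⟨i, hi⟩ : ∃ i, v i ≠ 0 := by
    by_contra h; push_neg at h; exact hv (funext h)
  have hsum : 0 < ∑ i, v i ^ 2 := by
    apply Finset.sum_pos' (fun j _ => sq_nonneg _)
    exact ⟨i, Finset.mem_univ i, by positivity⟩
  exact Real.sqrt_pos.2 (div_pos hsum hcard)

lemma Mop_nrm_le {A B : Type} [Fintype A] [Fintype B] (Adj : A → B → Prop) (dA dB : ℕ)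
    (hdA : 0 < dA) (hdB : 0 < dB)
    (hregA : ∀ a : A, (Finset.univ.filter (fun b => Adj a b)).card = dA)
    (hregB : ∀ b : B, (Finset.univ.filter (fun a => Adj a b)).card = dB)
    (v : B → ℝ) : nrm (Mop Adj v) ≤ nrm v := by
  by_cases hA : Nonempty A
  case neg =>
    have : IsEmpty A := not_nonempty_iff.1 hA
    unfold nrm
    rw [Finset.univ_eq_empty, Finset.sum_empty, zero_div, Real.sqrt_zero]
    exact Real.sqrt_nonneg _
  have hnA : 0 < (Fintype.card A : ℝ) := by exact_mod_cast Fintype.card_pos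
  have hnB : 0 < (Fintype.card B : ℝ) := by
    have : Nonempty B := by
      obtain ⟨a⟩ := hA
      have := hregA a
      rcases Finset.card_pos.1 (this ▸ hdA) with ⟨b, _⟩
      exact ⟨b⟩
    exact_mod_cast Fintype.card_pos
  have hdAr : (0:ℝ) < dA := by exact_mod_cast hdA
  unfold nrm
  apply Real.sqrt_le_sqrt
  rw [div_le_div_iff₀ hnA hnB]
  have key : ∀ a : A, (Mop Adj v a)^2 ≤ (∑ b ∈ Finset.univ.filter (fun b => Adj a b), v b ^ 2) / dA := by
    intro a
    unfold Mop
    rw [hregA a, div_pow, div_le_div_iff₀ (by positivity) hdAr]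
    have h1 : (∑ b ∈ Finset.univ.filter (fun b => Adj a b), v b)^2
        ≤ (∑ b ∈ Finset.univ.filter (fun b => Adj a b), v b ^ 2) * dA := by
      have := Finset.sum_mul_sq_le_sq_mul_sq (Finset.univ.filter (fun b => Adj a b)) v (fun _ => 1)
      simpa [hregA a, mul_comm] using this
    calc (∑ b ∈ Finset.univ.filter (fun b => Adj a b), v b)^2 * (dA:ℝ)
        ≤ ((∑ b ∈ Finset.univ.filter (fun b => Adj a b), v b ^ 2) * dA) * dA := by
          apply mul_le_mul_of_nonneg_right h1 (le_of_lt hdAr)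
      _ = (∑ b ∈ Finset.univ.filter (fun b => Adj a b), v b ^ 2) * (dA:ℝ)^2 := by ring
  have h2 : ∑ a : A, (Mop Adj v a)^2 ≤ (dB / dA : ℝ) * ∑ b, v b ^ 2 := by
    calc ∑ a : A, (Mop Adj v a)^2
        ≤ ∑ a : A, (∑ b ∈ Finset.univ.filter (fun b => Adj a b), v b ^ 2) / dA :=
          Finset.sum_le_sum (fun a _ => key a)
      _ = (∑ a : A, ∑ b ∈ Finset.univ.filter (fun b => Adj a b), v b ^ 2) / dA := by
          rw [Finset.sum_div]
      _ = (∑ b : B, ((Finset.univ.filter (fun a => Adj a b)).card : ℝ) * v b ^ 2) / dA := by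
          rw [dcount]
      _ = (dB / dA : ℝ) * ∑ b, v b ^ 2 := by
          simp_rw [hregB]
          rw [← Finset.mul_sum]
          ring
  have hhs := handshake Adj dA dB hregA hregB
  calc (∑ a : A, (Mop Adj v a)^2) * (Fintype.card B : ℝ)
      ≤ ((dB / dA : ℝ) * ∑ b, v b ^ 2) * (Fintype.card B : ℝ) := by
        apply mul_le_mul_of_nonneg_right h2 (le_of_lt hnB)
    _ = (∑ b, v b ^ 2) * ((dB * (Fintype.card B : ℝ)) / dA) := by ring
    _ = (∑ b, v b ^ 2) * (Fintype.card A : ℝ) := by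
        rw [← hhs]; field_simp

lemma lam_bdd {A B : Type} [Fintype A] [Fintype B] (Adj : A → B → Prop) (dA dB : ℕ)
    (hdA : 0 < dA) (hdB : 0 < dB)
    (hregA : ∀ a : A, (Finset.univ.filter (fun b => Adj a b)).card = dA)
    (hregB : ∀ b : B, (Finset.univ.filter (fun a => Adj a b)).card = dB) :
    BddAbove {r : ℝ | ∃ v : B → ℝ, (∑ b, v b) = 0 ∧ v ≠ 0 ∧ r = nrm (Mop Adj v) / nrm v} := by
  refine ⟨1, fun r hr => ?_⟩
  obtain ⟨v, -, hv0, rfl⟩ := hr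
  rw [div_le_one (nrm_pos v hv0)]
  exact Mop_nrm_le Adj dA dB hdA hdB hregA hregB v

lemma lam_nonneg {A B : Type} [Fintype A] [Fintype B] (Adj : A → B → Prop) (dA dB : ℕ)
    (hdA : 0 < dA) (hdB : 0 < dB)
    (hregA : ∀ a : A, (Finset.univ.filter (fun b => Adj a b)).card = dA)
    (hregB : ∀ b : B, (Finset.univ.filter (fun a => Adj a b)).card = dB) :
    0 ≤ lam Adj := by
  unfold lam
  by_cases hS : {r : ℝ | ∃ v : B → ℝ, (∑ b, v b) = 0 ∧ v ≠ 0 ∧ r = nrm (Mop Adj v) / nrm v}.Nonempty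
  · obtain ⟨r, hr⟩ := hS
    have hr0 : 0 ≤ r := by
      obtain ⟨v, -, -, rfl⟩ := hr
      exact div_nonneg (nrm_nonneg _) (nrm_nonneg _)
    exact le_trans hr0 (le_csSup (lam_bdd Adj dA dB hdA hdB hregA hregB) hr)
  · rw [Set.not_nonempty_iff_eq_empty.1 hS, Real.sSup_empty]

lemma lam_spec {A B : Type} [Fintype A] [Fintype B] (Adj : A → B → Prop) (dA dB : ℕ)
    (hdA : 0 < dA) (hdB : 0 < dB)
    (hregA : ∀ a : A, (Finset.univ.filter (fun b => Adj a b)).card = dA)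
    (hregB : ∀ b : B, (Finset.univ.filter (fun a => Adj a b)).card = dB)
    (v : B → ℝ) (hsum : (∑ b, v b) = 0) : nrm (Mop Adj v) ≤ lam Adj * nrm v := by
  by_cases hv0 : v = 0
  · subst hv0
    have h1 : Mop Adj (0 : B → ℝ) = 0 := by
      funext a; unfold Mop; simp
    have h2 : nrm (0 : B → ℝ) = 0 := by
      unfold nrm; simp
    rw [h1, h2, mul_zero]
    have h3 : nrm (0 : A → ℝ) = 0 := by unfold nrm; simp
    exact le_of_eq h3
  · have hmem : nrm (Mop Adj v) / nrm v ∈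
        {r : ℝ | ∃ v : B → ℝ, (∑ b, v b) = 0 ∧ v ≠ 0 ∧ r = nrm (Mop Adj v) / nrm v} :=
      ⟨v, hsum, hv0, rfl⟩
    have := le_csSup (lam_bdd Adj dA dB hdA hdB hregA hregB) hmem
    have hpos := nrm_pos v hv0
    calc nrm (Mop Adj v) = (nrm (Mop Adj v) / nrm v) * nrm v := by field_simp
      _ ≤ lam Adj * nrm v := mul_le_mul_of_nonneg_right this (le_of_lt hpos)


set_option maxHeartbeats 1000000 in
/-- edge-sampling lemma for bi-regular bipartite graphs. -/
theorem edge_sampling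
    {A B : Type} [Fintype A] [Fintype B]
    (Adj : A → B → Prop) (dA dB : ℕ) (hdA : 0 < dA) (hdB : 0 < dB)
    (hregA : ∀ a : A, (Finset.univ.filter (fun b => Adj a b)).card = dA)
    (hregB : ∀ b : B, (Finset.univ.filter (fun a => Adj a b)).card = dB)
    (B' : Finset B) (hB' : B'.Nonempty)
    (E' : A → B → Prop) (hE' : ∀ a b, E' a b → Adj a b)
    (μ : ℝ) (hμ : μ = (B'.card : ℝ) / (Fintype.card B : ℝ)) :
    |ex B' (fun b => pr (Finset.univ.filter (fun a => Adj a b)) (fun a => E' a b)) -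
      ex (Finset.univ : Finset A) (fun a =>
        pr (Finset.univ.filter (fun b => Adj a b ∧ b ∈ B')) (fun b => E' a b))| ≤
      lam Adj / Real.sqrt μ := by
  classical
  -- basic positivity
  have hBne : Nonempty B := ⟨hB'.choose⟩
  have hnB : (0:ℝ) < (Fintype.card B : ℝ) := by exact_mod_cast Fintype.card_pos
  have hk : (0:ℝ) < (B'.card : ℝ) := by exact_mod_cast Finset.card_pos.2 hB'
  have hdAr : (0:ℝ) < (dA:ℝ) := by exact_mod_cast hdA
  have hdBr : (0:ℝ) < (dB:ℝ) := by exact_mod_cast hdB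
  have hhs := handshake Adj dA dB hregA hregB
  have hnA : (0:ℝ) < (Fintype.card A : ℝ) := by
    have h0 : (0:ℝ) ≤ (Fintype.card A : ℝ) := Nat.cast_nonneg _
    nlinarith
  have hμpos : 0 < μ := hμ ▸ div_pos hk hnB
  have hμle1 : μ ≤ 1 := by
    rw [hμ, div_le_one hnB]
    exact_mod_cast Finset.card_le_univ B'
  set nA := (Fintype.card A : ℝ) with hnAdef
  set nB := (Fintype.card B : ℝ) with hnBdef
  set k := (B'.card : ℝ) with hkdef
  set v : B → ℝ := fun b => (if b ∈ B' then (1:ℝ) else 0) - μ with hv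
  set P : A → ℝ := fun a =>
    pr (Finset.univ.filter (fun b => Adj a b ∧ b ∈ B')) (fun b => E' a b) with hP
  set m : A → ℝ := fun a => ((Finset.univ.filter (fun b => Adj a b ∧ b ∈ B')).card : ℝ) with hm
  set n' : A → ℝ := fun a =>
    (((Finset.univ.filter (fun b => Adj a b ∧ b ∈ B')).filter (fun b => E' a b)).card : ℝ)
    with hn'
  -- sum of v is zero
  have hsum_ind : ∑ b : B, (if b ∈ B' then (1:ℝ) else 0) = k := by
    rw [Finset.sum_ite_mem, Finset.univ_inter, Finset.sum_const, nsmul_eq_mul, mul_one]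
  have hvsum : ∑ b, v b = 0 := by
    simp only [hv]
    rw [Finset.sum_sub_distrib, hsum_ind, Finset.sum_const, Finset.card_univ, nsmul_eq_mul,
      mul_comm]
    rw [hμ]
    field_simp
    simp [hnBdef]
  -- Mop formula
  have hMop : ∀ a, Mop Adj v a = (m a - μ * dA) / dA := by
    intro a
    unfold Mop
    rw [hregA a]
    congr 1
    simp only [hv]
    rw [Finset.sum_sub_distrib, Finset.sum_const, hregA a, nsmul_eq_mul, mul_comm]
    congr 1
    rw [Finset.sum_ite_mem, Finset.sum_const, nsmul_eq_mul, mul_one]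
    simp only [hm]
    norm_cast
    congr 1
    rw [← Finset.filter_filter, Finset.filter_mem_eq_inter]
  -- P * m = n'
  have hPm : ∀ a, P a * m a = n' a := by
    intro a
    by_cases h0 : m a = 0
    · have hempty : (Finset.univ.filter (fun b => Adj a b ∧ b ∈ B')) = ∅ := by
        rw [← Finset.card_eq_zero]
        simp only [hm] at h0
        exact_mod_cast h0
      simp only [hP, hn', pr, hempty, h0]
      simp
    · simp only [hP, hn', pr, hm] at *
      field_simp
  have hP0 : ∀ a, 0 ≤ P a := fun a => div_nonneg (Nat.cast_nonneg _) (Nat.cast_nonneg _)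
  have hP1 : ∀ a, P a ≤ 1 := by
    intro a
    by_cases h0 : m a = 0
    · simp only [hP, pr, hm] at *
      rw [h0, div_zero]
      norm_num
    · simp only [hP, pr, hm] at *
      rw [div_le_one (lt_of_le_of_ne (Nat.cast_nonneg _) (Ne.symm h0))]
      exact_mod_cast Finset.card_filter_le _ _
  -- D1 formula
  have hD1 : ex B' (fun b => pr (Finset.univ.filter (fun a => Adj a b)) (fun a => E' a b))
      = (∑ b ∈ B', (((Finset.univ.filter (fun a => Adj a b)).filter
          (fun a => E' a b)).card : ℝ)) / (dB * k) := by
    unfold ex pr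
    simp_rw [hregB]
    rw [← Finset.sum_div, div_div, hkdef]
  -- swap sums
  have hswap : ∑ b ∈ B', (((Finset.univ.filter (fun a => Adj a b)).filter
      (fun a => E' a b)).card : ℝ) = ∑ a : A, n' a := by
    have h1 : ∀ b, (((Finset.univ.filter (fun a => Adj a b)).filter
        (fun a => E' a b)).card : ℝ)
        = ∑ a : A, (if Adj a b ∧ E' a b then (1:ℝ) else 0) := by
      intro b
      rw [Finset.filter_filter, Finset.sum_boole]
    have h2 : ∀ a, n' a
        = ∑ b : B, (if b ∈ B' then (if Adj a b ∧ E' a b then (1:ℝ) else 0) else 0) := by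
      intro a
      simp only [hn']
      rw [Finset.filter_filter, ← Finset.sum_boole]
      apply Finset.sum_congr rfl
      intro b _
      by_cases h : Adj a b <;> by_cases h2 : b ∈ B' <;> by_cases h3 : E' a b <;>
        simp [h, h2, h3]
    simp_rw [h1, h2]
    rw [Finset.sum_comm]
    apply Finset.sum_congr rfl
    intro a _
    rw [Finset.sum_ite_mem, Finset.univ_inter]
  -- D2 formula
  have hD2 : ex (Finset.univ : Finset A) P = (∑ a : A, P a) / nA := by
    unfold ex
    rw [Finset.card_univ]
  -- the key fraction identity
  have hfrac : μ * (dA:ℝ) / (k * dB) = 1 / nA := by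
    rw [hμ]
    field_simp
    linear_combination hhs
  -- key identity
  have hterm : ∀ a, ((dA:ℝ)/(k*dB)) * (P a * Mop Adj v a) = n' a/(dB*k) - P a/nA := by
    intro a
    rw [hMop a]
    have h1 : ((dA:ℝ)/(k*dB)) * (P a * ((m a - μ*dA)/dA))
        = (P a * m a)/(dB*k) - P a * (μ * (dA:ℝ) / (k * dB)) := by
      field_simp
    rw [h1, hPm a, hfrac]
    ring
  have hkey : ex B' (fun b => pr (Finset.univ.filter (fun a => Adj a b)) (fun a => E' a b))
      - ex (Finset.univ : Finset A) P
      = ((dA:ℝ)/(k*dB)) * ∑ a, P a * Mop Adj v a := by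
    rw [hD1, hswap, hD2, Finset.mul_sum]
    simp_rw [hterm]
    rw [Finset.sum_sub_distrib, ← Finset.sum_div, ← Finset.sum_div]
  -- Cauchy-Schwarz bound
  have hMopSq : ∑ a : A, (Mop Adj v a)^2 = nA * (nrm (Mop Adj v))^2 := by
    unfold nrm
    rw [Real.sq_sqrt (by positivity)]
    field_simp
    rw [mul_div_assoc, ← hnAdef, div_self hnA.ne', mul_one]
  have hPsq : ∑ a : A, (P a)^2 ≤ nA := by
    calc ∑ a : A, (P a)^2 ≤ ∑ a : A, 1 := by
          apply Finset.sum_le_sum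
          intro a _
          have := hP0 a; have := hP1 a
          nlinarith
      _ = nA := by rw [Finset.sum_const, Finset.card_univ, nsmul_eq_mul, mul_one]
  have hCS : |∑ a, P a * Mop Adj v a| ≤ nA * nrm (Mop Adj v) := by
    have hcs := Finset.sum_mul_sq_le_sq_mul_sq Finset.univ P (Mop Adj v)
    have hsq : (∑ a, P a * Mop Adj v a)^2 ≤ (nA * nrm (Mop Adj v))^2 := by
      calc (∑ a, P a * Mop Adj v a)^2
          ≤ (∑ a : A, (P a)^2) * ∑ a : A, (Mop Adj v a)^2 := hcs
        _ ≤ nA * (nA * (nrm (Mop Adj v))^2) := by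
            rw [hMopSq]
            apply mul_le_mul_of_nonneg_right hPsq (by positivity)
        _ = (nA * nrm (Mop Adj v))^2 := by ring
    have := Real.sqrt_le_sqrt hsq
    rwa [Real.sqrt_sq_eq_abs, Real.sqrt_sq (mul_nonneg hnA.le (nrm_nonneg _))] at this
  -- norm of v
  have hμnB : μ * nB = k := by rw [hμ]; field_simp
  have hSv : ∑ b, v b ^ 2 = k * (1 - μ) := by
    have hpt : ∀ b : B, v b ^ 2
        = (if b ∈ B' then (1:ℝ) else 0) - 2*μ*(if b ∈ B' then (1:ℝ) else 0) + μ^2 := by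
      intro b
      by_cases h : b ∈ B' <;> simp only [hv, h, if_true, if_false] <;> ring
    simp_rw [hpt]
    rw [Finset.sum_add_distrib, Finset.sum_sub_distrib, hsum_ind, ← Finset.mul_sum, hsum_ind,
      Finset.sum_const, Finset.card_univ, nsmul_eq_mul]
    linear_combination μ * hμnB
  have hvnrm : nrm v ≤ Real.sqrt μ := by
    unfold nrm
    apply Real.sqrt_le_sqrt
    rw [hSv, div_le_iff₀ hnB]
    nlinarith [mul_nonneg hk.le hμpos.le]
  -- spectral bound
  have hspec := lam_spec Adj dA dB hdA hdB hregA hregB v hvsum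
  have hlam0 := lam_nonneg Adj dA dB hdA hdB hregA hregB
  have hsqp : 0 < Real.sqrt μ := Real.sqrt_pos.2 hμpos
  have hsq2 : Real.sqrt μ * Real.sqrt μ = μ := Real.mul_self_sqrt hμpos.le
  have hcoef : (0:ℝ) < (dA:ℝ)/(k*dB) := by positivity
  rw [hkey, abs_mul, abs_of_pos hcoef]
  calc ((dA:ℝ)/(k*dB)) * |∑ a, P a * Mop Adj v a|
      ≤ ((dA:ℝ)/(k*dB)) * (nA * nrm (Mop Adj v)) := by
        apply mul_le_mul_of_nonneg_left hCS hcoef.le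
    _ ≤ ((dA:ℝ)/(k*dB)) * (nA * (lam Adj * nrm v)) := by
        apply mul_le_mul_of_nonneg_left _ hcoef.le
        exact mul_le_mul_of_nonneg_left hspec hnA.le
    _ ≤ ((dA:ℝ)/(k*dB)) * (nA * (lam Adj * Real.sqrt μ)) := by
        apply mul_le_mul_of_nonneg_left _ hcoef.le
        apply mul_le_mul_of_nonneg_left _ hnA.le
        exact mul_le_mul_of_nonneg_left hvnrm hlam0
    _ = ((dA:ℝ)/(k*dB) * nA) * (lam Adj * Real.sqrt μ) := by ring
    _ = lam Adj / Real.sqrt μ := by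
        have hc2 : (dA:ℝ)/(k*dB) * nA = 1/μ := by
          rw [hμ, one_div_div]
          field_simp
          linear_combination hhs
        rw [hc2]
        have h1 : Real.sqrt μ ≠ 0 := hsqp.ne'
        have h2 : μ ≠ 0 := hμpos.ne'
        field_simp
        linear_combination lam Adj * hsq2
end
end
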